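/- arXiv:1204.4420 — 3 statements merged into one kernel-verified Lean document; each statement's English description precedes it below -/
import Mathlib

section
/- (Proposition 2, case 2b) Assume J₁₁ < 0 and J₁₂ > |J₁₁|, and set λ_M = J₁₁ + J₁₂ > 0. If β > 2/λ_M, then f has exactly three critical points in (−1,1)²: the origin (0,0) and the two points ±(x̃,x̃), where x̃ is the unique solution in (0,1) of x = tanh((βλ_M/2)·x). The origin is a saddle (inflection) point, while (x̃,x̃) and (−x̃,−x̃) are local maximum points of f. -/
/-- The entropy function 𝓘(x) = ((1+x)log(1+x) + (1-x)log(1-x))/2.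
Note `Real.log 0 = 0` in Mathlib, which implements the convention 0·log 0 = 0. -/
noncomputable def entI (x : ℝ) : ℝ :=
  ((1 + x) * Real.log (1 + x) + (1 - x) * Real.log (1 - x)) / 2

/-- Pressure functional of the symmetric zero-field bipartite mean-field model
(α₁ = α₂ = 1/2, J₁₁ = J₂₂, h₁ = h₂ = 0). -/
noncomputable def fSym (β J11 J12 : ℝ) (μ : ℝ × ℝ) : ℝ :=
  β / 8 * (J11 * (μ.1 ^ 2 + μ.2 ^ 2) + 2 * J12 * μ.1 * μ.2) - (entI μ.1 + entI μ.2) / 2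

/-- A critical point of f: a point of the open square (−1,1)² where both partial
derivatives of f vanish. -/
def IsCritPt (β J11 J12 : ℝ) (μ : ℝ × ℝ) : Prop :=
  μ.1 ∈ Set.Ioo (-1 : ℝ) 1 ∧ μ.2 ∈ Set.Ioo (-1 : ℝ) 1 ∧
    deriv (fun x => fSym β J11 J12 (x, μ.2)) μ.1 = 0 ∧
    deriv (fun y => fSym β J11 J12 (μ.1, y)) μ.2 = 0

open Real Set

noncomputable def atanh (x : ℝ) : ℝ := (Real.log (1+x) - Real.log (1-x)) / 2

lemma atanh_zero : atanh 0 = 0 := by simp [atanh]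

lemma atanh_neg (x : ℝ) : atanh (-x) = - atanh x := by
  simp only [atanh]
  rw [show (1:ℝ) + -x = 1 - x by ring, show (1:ℝ) - -x = 1 + x by ring]
  ring

lemma hasDerivAt_atanh {x : ℝ} (hx : x ∈ Set.Ioo (-1:ℝ) 1) :
    HasDerivAt atanh (1/(1-x^2)) x := by
  have h1 : (0:ℝ) < 1 + x := by linarith [hx.1]
  have h2 : (0:ℝ) < 1 - x := by linarith [hx.2]
  have d1 : HasDerivAt (fun y : ℝ => Real.log (1+y)) (1/(1+x)) x := by
    simpa using ((hasDerivAt_id x).const_add 1).log h1.ne'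
  have d2 : HasDerivAt (fun y : ℝ => Real.log (1-y)) (-1/(1-x)) x := by
    simpa using ((hasDerivAt_id x).const_sub 1).log h2.ne'
  have := (d1.sub d2).div_const 2
  refine this.congr_deriv ?_
  have h3 : (1:ℝ) - x^2 ≠ 0 := by nlinarith
  field_simp
  ring

lemma continuous_entI : Continuous entI := by
  have h : Continuous fun y : ℝ => y * Real.log y := Real.continuous_mul_log
  exact ((h.comp (continuous_const.add continuous_id)).add
    (h.comp (continuous_const.sub continuous_id))).div_const 2

lemma entI_even (x : ℝ) : entI (-x) = entI x := by
  simp only [entI]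
  rw [show (1:ℝ) + -x = 1 - x by ring, show (1:ℝ) - -x = 1 + x by ring]
  ring

lemma entI_zero : entI 0 = 0 := by simp [entI]

lemma hasDerivAt_entI {x : ℝ} (hx : x ∈ Set.Ioo (-1:ℝ) 1) :
    HasDerivAt entI (atanh x) x := by
  have h1 : (0:ℝ) < 1 + x := by linarith [hx.1]
  have h2 : (0:ℝ) < 1 - x := by linarith [hx.2]
  have da : HasDerivAt (fun y : ℝ => 1 + y) 1 x := by
    simpa using (hasDerivAt_id x).const_add 1
  have db : HasDerivAt (fun y : ℝ => 1 - y) (-1) x := by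
    simpa using (hasDerivAt_id x).const_sub 1
  have d1 : HasDerivAt (fun y : ℝ => (1+y) * Real.log (1+y))
      (1 * Real.log (1+x) + (1+x) * (1/(1+x))) x :=
    da.mul (by simpa using da.log h1.ne')
  have d2 : HasDerivAt (fun y : ℝ => (1-y) * Real.log (1-y))
      ((-1) * Real.log (1-x) + (1-x) * (-1/(1-x))) x :=
    db.mul (by simpa using db.log h2.ne')
  have := (d1.add d2).div_const 2
  have he : entI = fun y : ℝ => ((1+y) * Real.log (1+y) + (1-y) * Real.log (1-y))/2 := rfl
  rw [he]
  refine this.congr_deriv ?_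
  rw [atanh]
  field_simp
  ring

lemma atanh_mono : StrictMonoOn atanh (Set.Ioo (-1:ℝ) 1) := by
  apply strictMonoOn_of_deriv_pos (convex_Ioo _ _)
  · exact fun x hx => (hasDerivAt_atanh hx).continuousAt.continuousWithinAt
  · intro x hx
    rw [interior_Ioo] at hx
    rw [(hasDerivAt_atanh hx).deriv]
    have h3 : (0:ℝ) < 1 - x^2 := by nlinarith [hx.1, hx.2]
    positivity

lemma atanh_pos {x : ℝ} (hx : x ∈ Set.Ioo (0:ℝ) 1) : 0 < atanh x := by
  have h := atanh_mono (show (0:ℝ) ∈ Set.Ioo (-1:ℝ) 1 by norm_num)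
    ⟨by linarith [hx.1], hx.2⟩ hx.1
  rwa [atanh_zero] at h

lemma one_add_tanh (z : ℝ) : 1 + Real.tanh z = Real.exp z / Real.cosh z := by
  rw [Real.tanh_eq_sinh_div_cosh, ← Real.cosh_add_sinh]
  field_simp [(Real.cosh_pos (x := z)).ne']

lemma one_sub_tanh (z : ℝ) : 1 - Real.tanh z = Real.exp (-z) / Real.cosh z := by
  rw [Real.tanh_eq_sinh_div_cosh, ← Real.cosh_sub_sinh]
  field_simp [(Real.cosh_pos (x := z)).ne']

lemma tanh_mem_Ioo (z : ℝ) : Real.tanh z ∈ Set.Ioo (-1:ℝ) 1 := by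
  have h1 : 0 < 1 + Real.tanh z := by
    rw [one_add_tanh]; positivity
  have h2 : 0 < 1 - Real.tanh z := by
    rw [one_sub_tanh]; positivity
  constructor <;> linarith

lemma atanh_tanh (z : ℝ) : atanh (Real.tanh z) = z := by
  rw [atanh, one_add_tanh, one_sub_tanh,
    Real.log_div (Real.exp_ne_zero z) (Real.cosh_pos (x := z)).ne',
    Real.log_div (Real.exp_ne_zero (-z)) (Real.cosh_pos (x := z)).ne',
    Real.log_exp, Real.log_exp]
  ring

lemma tanh_atanh {x : ℝ} (hx : x ∈ Set.Ioo (-1:ℝ) 1) : Real.tanh (atanh x) = x := by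
  have h1 : (0:ℝ) < 1 + x := by linarith [hx.1]
  have h2 : (0:ℝ) < 1 - x := by linarith [hx.2]
  have key : ∀ z : ℝ, Real.tanh z = (Real.exp (2*z) - 1)/(Real.exp (2*z) + 1) := by
    intro z
    rw [Real.tanh_eq_sinh_div_cosh, Real.sinh_eq, Real.cosh_eq, Real.exp_neg,
      show 2*z = z + z by ring, Real.exp_add]
    have := Real.exp_pos z
    have hne : Real.exp z ≠ 0 := this.ne'
    have hden : Real.exp z * Real.exp z + 1 > 0 := by positivity
    field_simp
  have he : Real.exp (2 * atanh x) = (1+x)/(1-x) := by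
    rw [atanh, show 2*((Real.log (1+x) - Real.log (1-x))/2) = Real.log (1+x) - Real.log (1-x) by ring,
      Real.exp_sub, Real.exp_log h1, Real.exp_log h2]
  rw [key, he]
  rw [div_eq_iff (by positivity : ((1+x)/(1-x) + 1) ≠ 0)]
  field_simp
  ring

noncomputable def gCW (c x : ℝ) : ℝ := c/2 * x^2 - entI x

lemma continuous_gCW (c : ℝ) : Continuous (gCW c) := by
  unfold gCW
  exact (continuous_const.mul (continuous_pow 2)).sub continuous_entI

lemma gCW_even (c s : ℝ) : gCW c (-s) = gCW c s := by
  simp [gCW, entI_even]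

lemma gCW_zero (c : ℝ) : gCW c 0 = 0 := by simp [gCW, entI_zero]

lemma hasDerivAt_gCW (c : ℝ) {x : ℝ} (hx : x ∈ Set.Ioo (-1:ℝ) 1) :
    HasDerivAt (gCW c) (c*x - atanh x) x := by
  have h1 : HasDerivAt (fun y : ℝ => c/2 * y^2) (c/2 * (2*x^1)) x := by
    exact_mod_cast (hasDerivAt_pow 2 x).const_mul (c/2)
  have := h1.sub (hasDerivAt_entI hx)
  refine this.congr_deriv ?_
  ring

lemma entI_nonneg {t : ℝ} (ht : t ∈ Set.Icc (0:ℝ) 1) : 0 ≤ entI t := by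
  have hmono : MonotoneOn entI (Set.Icc (0:ℝ) 1) := by
    apply monotoneOn_of_deriv_nonneg (convex_Icc _ _) continuous_entI.continuousOn
    · intro x hx
      rw [interior_Icc] at hx
      exact (hasDerivAt_entI ⟨by linarith [hx.1], hx.2⟩).differentiableAt.differentiableWithinAt
    · intro x hx
      rw [interior_Icc] at hx
      rw [(hasDerivAt_entI ⟨by linarith [hx.1], hx.2⟩).deriv]
      exact (atanh_pos hx).le
  have := hmono (left_mem_Icc.mpr zero_le_one) ht ht.1
  rwa [entI_zero] at this

lemma entI_convex : ConvexOn ℝ (Set.Icc (-1:ℝ) 1) entI := by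
  apply convexOn_of_deriv2_nonneg (convex_Icc _ _) continuous_entI.continuousOn
  · intro x hx
    rw [interior_Icc] at hx
    exact (hasDerivAt_entI hx).differentiableAt.differentiableWithinAt
  · intro x hx
    rw [interior_Icc] at hx
    have heq : deriv entI =ᶠ[nhds x] atanh := by
      filter_upwards [isOpen_Ioo.mem_nhds hx] with y hy using (hasDerivAt_entI hy).deriv
    exact ((hasDerivAt_atanh hx).congr_of_eventuallyEq
      heq).differentiableAt.differentiableWithinAt
  · intro x hx
    rw [interior_Icc] at hx
    have heq : deriv entI =ᶠ[nhds x] atanh := by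
      filter_upwards [isOpen_Ioo.mem_nhds hx] with y hy using (hasDerivAt_entI hy).deriv
    have h2 : deriv (deriv entI) x = 1/(1-x^2) := by
      rw [heq.deriv_eq, (hasDerivAt_atanh hx).deriv]
    have h3 : (0:ℝ) < 1 - x^2 := by nlinarith [hx.1, hx.2]
    show 0 ≤ deriv^[2] entI x
    rw [show deriv^[2] entI = deriv (deriv entI) from rfl, h2]
    positivity

lemma exists_xt {c : ℝ} (hc : 1 < c) : ∃ xt ∈ Set.Ioo (0:ℝ) 1,
    atanh xt = c * xt ∧
    (∀ y ∈ Set.Ioo (0:ℝ) 1, atanh y = c * y → y = xt) ∧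
    (∀ s ∈ Set.Icc (-1:ℝ) 1, gCW c s ≤ gCW c xt) ∧
    (∀ ε > (0:ℝ), ∃ t, 0 < t ∧ t < ε ∧ t < 1 ∧ 0 < gCW c t) := by
  have hc0 : 0 < c := by linarith
  set p : ℝ → ℝ := fun x => c * x - atanh x with hp
  have hinv : 1/c < 1 := by rw [div_lt_one hc0]; linarith
  have hinv0 : 0 < 1/c := by positivity
  set a : ℝ := Real.sqrt (1 - 1/c) with haDef
  have ha2 : a^2 = 1 - 1/c := Real.sq_sqrt (by linarith)
  have ha0 : 0 < a := Real.sqrt_pos.mpr (by linarith)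
  have ha1 : a < 1 := by nlinarith
  have hpder : ∀ x ∈ Set.Ioo (-1:ℝ) 1, HasDerivAt p (c - 1/(1-x^2)) x := by
    intro x hx
    have := ((hasDerivAt_id x).const_mul c).sub (hasDerivAt_atanh hx)
    exact this.congr_deriv (by ring)
  have hp0 : p 0 = 0 := by simp [hp, atanh_zero]
  -- strict monotonicity on [0, a]
  have hmono : StrictMonoOn p (Set.Icc 0 a) := by
    apply strictMonoOn_of_deriv_pos (convex_Icc _ _)
    · intro x hx
      exact (hpder x ⟨by linarith [hx.1], by linarith [hx.2]⟩).continuousAt.continuousWithinAt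
    · intro x hx
      rw [interior_Icc] at hx
      have hx' : x ∈ Set.Ioo (-1:ℝ) 1 := ⟨by linarith [hx.1], by linarith [hx.2]⟩
      rw [(hpder x hx').deriv]
      have h1 : 1/c < 1 - x^2 := by nlinarith [hx.1, hx.2]
      have h2 : (0:ℝ) < 1 - x^2 := by linarith
      have h3 : 1/(1-x^2) < c := by
        rw [div_lt_iff₀ h2]
        have hcc : c * (1/c) = 1 := by field_simp
        nlinarith
      linarith
  -- strict antitonicity on [a, 1)
  have hanti : StrictAntiOn p (Set.Ico a 1) := by
    apply strictAntiOn_of_deriv_neg (convex_Ico _ _)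
    · intro x hx
      exact (hpder x ⟨by linarith [hx.1], hx.2⟩).continuousAt.continuousWithinAt
    · intro x hx
      rw [interior_Ico] at hx
      have hx' : x ∈ Set.Ioo (-1:ℝ) 1 := ⟨by linarith [hx.1], hx.2⟩
      rw [(hpder x hx').deriv]
      have h2 : (0:ℝ) < 1 - x^2 := by nlinarith [hx.1, hx.2]
      have h1 : 1 - x^2 < 1/c := by nlinarith [hx.1]
      have h3 : c < 1/(1-x^2) := by
        rw [lt_div_iff₀ h2]
        have hcc : c * (1/c) = 1 := by field_simp
        nlinarith
      linarith
  have hpa : 0 < p a := by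
    have := hmono (left_mem_Icc.mpr ha0.le) (right_mem_Icc.mpr ha0.le) ha0
    rwa [hp0] at this
  -- a point b where p is negative
  set b0 : ℝ := 1 - Real.exp (-(2*c+1)) with hb0Def
  have hε1 : Real.exp (-(2*c+1)) < 1 := by
    rw [Real.exp_lt_one_iff]; linarith
  have hεpos : 0 < Real.exp (-(2*c+1)) := Real.exp_pos _
  have hb00 : 0 < b0 := by simp only [hb0Def]; linarith
  have hb01 : b0 < 1 := by simp only [hb0Def]; linarith
  have hab0 : c < atanh b0 := by
    have h1b : (1:ℝ) - b0 = Real.exp (-(2*c+1)) := by simp [hb0Def]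
    have hlog2 : Real.log (1 - b0) = -(2*c+1) := by rw [h1b, Real.log_exp]
    have hlog1 : 0 ≤ Real.log (1 + b0) := Real.log_nonneg (by linarith)
    show c < (Real.log (1+b0) - Real.log (1-b0))/2
    rw [hlog2]; linarith
  set b : ℝ := max b0 ((a+1)/2) with hbDef
  have hba : a < b := lt_of_lt_of_le (by linarith) (le_max_right _ _)
  have hb1 : b < 1 := max_lt hb01 (by linarith)
  have hb0pos : 0 < b := lt_of_lt_of_le hb00 (le_max_left _ _)
  have hpb : p b < 0 := by
    have hmb : atanh b0 ≤ atanh b := by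
      apply atanh_mono.monotoneOn ⟨by linarith, hb01⟩ ⟨by linarith, hb1⟩ (le_max_left _ _)
    have hcb : c * b < c := by nlinarith
    show c * b - atanh b < 0
    linarith
  -- intermediate value theorem
  have hcont : ContinuousOn p (Set.Icc a b) := by
    intro x hx
    exact (hpder x ⟨by linarith [hx.1], by linarith [hx.2]⟩).continuousAt.continuousWithinAt
  obtain ⟨xt, hxtmem, hxtp⟩ := intermediate_value_Ioo' hba.le hcont ⟨hpb, hpa⟩
  have hxt0 : 0 < xt := ha0.trans hxtmem.1
  have hxt1 : xt < 1 := hxtmem.2.trans hb1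
  have hfix : atanh xt = c * xt := by
    have : c * xt - atanh xt = 0 := hxtp
    linarith
  -- p is positive on (0, xt)
  have hppos : ∀ x ∈ Set.Ioo (0:ℝ) xt, 0 < p x := by
    intro x hx
    rcases le_or_gt x a with h | h
    · have := hmono (left_mem_Icc.mpr ha0.le) ⟨hx.1.le, h⟩ hx.1
      rwa [hp0] at this
    · have := hanti ⟨h.le, by linarith [hx.2]⟩ ⟨hxtmem.1.le, hxt1⟩ hx.2
      rwa [hxtp] at this
  refine ⟨xt, ⟨hxt0, hxt1⟩, hfix, ?_, ?_, ?_⟩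
  · -- uniqueness
    intro y hy hyfix
    have hpy : p y = 0 := by show c * y - atanh y = 0; linarith
    have hya : a < y := by
      by_contra h
      push_neg at h
      have h2 := hmono (left_mem_Icc.mpr ha0.le) ⟨hy.1.le, h⟩ hy.1
      rw [hp0] at h2
      linarith [hpy]
    exact hanti.injOn ⟨hya.le, hy.2⟩ ⟨hxtmem.1.le, hxt1⟩ (by rw [hpy, hxtp])
  · -- global max of gCW on [-1,1]
    have hgder : ∀ x ∈ Set.Ioo (-1:ℝ) 1, HasDerivAt (gCW c) (p x) x :=
      fun x hx => hasDerivAt_gCW c hx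
    have hgmono : MonotoneOn (gCW c) (Set.Icc 0 xt) := by
      apply monotoneOn_of_deriv_nonneg (convex_Icc _ _) (continuous_gCW c).continuousOn
      · intro x hx
        rw [interior_Icc] at hx
        exact (hgder x ⟨by linarith [hx.1], by linarith [hx.2]⟩).differentiableAt.differentiableWithinAt
      · intro x hx
        rw [interior_Icc] at hx
        rw [(hgder x ⟨by linarith [hx.1], by linarith [hx.2]⟩).deriv]
        exact (hppos x hx).le
    have hganti : AntitoneOn (gCW c) (Set.Icc xt 1) := by
      apply antitoneOn_of_deriv_nonpos (convex_Icc _ _) (continuous_gCW c).continuousOn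
      · intro x hx
        rw [interior_Icc] at hx
        exact (hgder x ⟨by linarith [hxt0, hx.1], hx.2⟩).differentiableAt.differentiableWithinAt
      · intro x hx
        rw [interior_Icc] at hx
        rw [(hgder x ⟨by linarith [hxt0, hx.1], hx.2⟩).deriv]
        have h := hanti ⟨hxtmem.1.le, hxt1⟩ ⟨by linarith [hxtmem.1, hx.1], hx.2⟩ hx.1
        rw [hxtp] at h
        linarith
    intro s hs
    have key : ∀ u ∈ Set.Icc (0:ℝ) 1, gCW c u ≤ gCW c xt := by
      intro u hu
      rcases le_or_gt u xt with h | h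
      · exact hgmono ⟨hu.1, h⟩ ⟨hxt0.le, le_refl _⟩ h
      · exact hganti ⟨le_refl _, hxt1.le⟩ ⟨h.le, hu.2⟩ h.le
    rcases le_or_gt 0 s with h | h
    · exact key s ⟨h, hs.2⟩
    · rw [← gCW_even]
      exact key (-s) ⟨by linarith, by linarith [hs.1]⟩
  · -- positivity of gCW near 0
    intro ε hε
    have hgsm : StrictMonoOn (gCW c) (Set.Icc 0 a) := by
      apply strictMonoOn_of_deriv_pos (convex_Icc _ _) (continuous_gCW c).continuousOn
      intro x hx
      rw [interior_Icc] at hx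
      rw [(hasDerivAt_gCW c ⟨by linarith [hx.1], by linarith [hx.2]⟩).deriv]
      have := hmono (left_mem_Icc.mpr ha0.le) ⟨hx.1.le, hx.2.le⟩ hx.1
      rw [hp0] at this
      exact this
    refine ⟨min (ε/2) (a/2), by positivity, ?_, ?_, ?_⟩
    · exact lt_of_le_of_lt (min_le_left _ _) (by linarith)
    · exact lt_of_le_of_lt (min_le_right _ _) (by linarith)
    · have ht0 : 0 < min (ε/2) (a/2) := by positivity
      have hta : min (ε/2) (a/2) ≤ a/2 := min_le_right _ _
      have := hgsm (left_mem_Icc.mpr ha0.le) ⟨ht0.le, by linarith⟩ ht0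
      rwa [gCW_zero] at this

lemma deriv_fSym_fst (β J11 J12 b : ℝ) {a : ℝ} (ha : a ∈ Set.Ioo (-1:ℝ) 1) :
    deriv (fun x => fSym β J11 J12 (x, b)) a = β/4*(J11*a + J12*b) - atanh a / 2 := by
  have h2 : HasDerivAt (fun x : ℝ => x^2) (2*a^1) a := by exact_mod_cast hasDerivAt_pow 2 a
  have h3 : HasDerivAt (fun x : ℝ => J11*(x^2 + b^2) + 2*J12*x*b)
      (J11*(2*a^1) + 2*J12*b) a := by
    have h4 := (h2.add_const (b^2)).const_mul J11
    have h5 : HasDerivAt (fun x : ℝ => 2*J12*x*b) (2*J12*b) a := by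
      simpa using ((hasDerivAt_id a).const_mul (2*J12)).mul_const b
    exact h4.add h5
  have h6 := (h3.const_mul (β/8)).sub
    (((hasDerivAt_entI ha).add_const (entI b)).div_const 2)
  have hfun : (fun x => fSym β J11 J12 (x, b)) =
      fun x => β/8*(J11*(x^2 + b^2) + 2*J12*x*b) - (entI x + entI b)/2 := rfl
  rw [hfun]; refine h6.deriv.trans ?_
  ring

lemma deriv_fSym_snd (β J11 J12 a : ℝ) {b : ℝ} (hb : b ∈ Set.Ioo (-1:ℝ) 1) :
    deriv (fun y => fSym β J11 J12 (a, y)) b = β/4*(J11*b + J12*a) - atanh b / 2 := by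
  have h2 : HasDerivAt (fun y : ℝ => y^2) (2*b^1) b := by exact_mod_cast hasDerivAt_pow 2 b
  have h3 : HasDerivAt (fun y : ℝ => J11*(a^2 + y^2) + 2*J12*a*y)
      (J11*(2*b^1) + 2*J12*a) b := by
    have h4 := ((h2.const_add (a^2)).const_mul J11)
    have h5 : HasDerivAt (fun y : ℝ => 2*J12*a*y) (2*J12*a) b := by
      simpa using (hasDerivAt_id b).const_mul (2*J12*a)
    exact h4.add h5
  have h6 := (h3.const_mul (β/8)).sub
    (((hasDerivAt_entI hb).const_add (entI a)).div_const 2)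
  have hfun : (fun y => fSym β J11 J12 (a, y)) =
      fun y => β/8*(J11*(a^2 + y^2) + 2*J12*a*y) - (entI a + entI y)/2 := rfl
  rw [hfun]; refine h6.deriv.trans ?_
  ring

lemma critpt_iff (β J11 J12 a b : ℝ) :
    IsCritPt β J11 J12 (a, b) ↔
      a ∈ Set.Ioo (-1:ℝ) 1 ∧ b ∈ Set.Ioo (-1:ℝ) 1 ∧
      atanh a = β/2*(J11*a + J12*b) ∧ atanh b = β/2*(J11*b + J12*a) := by
  constructor
  · rintro ⟨ha, hb, h1, h2⟩
    rw [deriv_fSym_fst β J11 J12 b ha] at h1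
    rw [deriv_fSym_snd β J11 J12 a hb] at h2
    exact ⟨ha, hb, by linarith, by linarith⟩
  · rintro ⟨ha, hb, h1, h2⟩
    refine ⟨ha, hb, ?_, ?_⟩
    · rw [deriv_fSym_fst β J11 J12 b ha]; linarith
    · rw [deriv_fSym_snd β J11 J12 a hb]; linarith

lemma fSym_diag (β J11 J12 t : ℝ) : fSym β J11 J12 (t, t) = gCW (β*(J11+J12)/2) t := by
  show β/8*(J11*(t^2 + t^2) + 2*J12*t*t) - (entI t + entI t)/2 = β*(J11+J12)/2/2*t^2 - entI t
  ring

lemma fSym_le {β J11 J12 : ℝ} (hβ0 : 0 < β) (hJ : J11 - J12 ≤ 0) {a b : ℝ}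
    (ha : a ∈ Set.Icc (-1:ℝ) 1) (hb : b ∈ Set.Icc (-1:ℝ) 1) :
    fSym β J11 J12 (a, b) ≤ gCW (β*(J11+J12)/2) ((a+b)/2) := by
  have hcvx := entI_convex.2 ha hb (by norm_num : (0:ℝ) ≤ 1/2) (by norm_num : (0:ℝ) ≤ 1/2)
    (by norm_num)
  simp only [smul_eq_mul] at hcvx
  have hq : β*(J11-J12)/16*(a-b)^2 ≤ 0 := by
    have h1 : 0 ≤ β * (J12 - J11) := mul_nonneg hβ0.le (by linarith)
    nlinarith [mul_nonneg h1 (sq_nonneg (a - b))]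
  have hent : entI ((a+b)/2) ≤ (entI a + entI b)/2 := by
    have : (1:ℝ)/2 * a + 1/2 * b = (a+b)/2 := by ring
    rw [this] at hcvx
    linarith
  show β/8*(J11*(a^2 + b^2) + 2*J12*a*b) - (entI a + entI b)/2 ≤
    β*(J11+J12)/2/2*((a+b)/2)^2 - entI ((a+b)/2)
  nlinarith

/-- Proposition 2, case 2b: for J₁₁ < 0, J₁₂ > |J₁₁| (so λ_M = J₁₁ + J₁₂ > 0), if
β > 2/λ_M then f has exactly three critical points: (0,0) (a saddle point) and ±(x̃,x̃)
(local maximum points), where x̃ is the unique solution in (0,1) of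
x = tanh((βλ_M/2)x). -/
theorem prop2_case2b (β J11 J12 : ℝ) (hJ11 : J11 < 0) (hJ12 : |J11| < J12)
    (hβ0 : 0 < β) (hβ : 2 / (J11 + J12) < β) :
    ∃ xt : ℝ, xt ∈ Set.Ioo (0 : ℝ) 1 ∧
      xt = Real.tanh (β * (J11 + J12) / 2 * xt) ∧
      (∀ y ∈ Set.Ioo (0 : ℝ) 1, y = Real.tanh (β * (J11 + J12) / 2 * y) → y = xt) ∧
      {μ : ℝ × ℝ | IsCritPt β J11 J12 μ} = {(0, 0), (xt, xt), (-xt, -xt)} ∧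
      (¬ IsLocalMax (fSym β J11 J12) (0, 0) ∧ ¬ IsLocalMin (fSym β J11 J12) (0, 0)) ∧
      IsLocalMax (fSym β J11 J12) (xt, xt) ∧ IsLocalMax (fSym β J11 J12) (-xt, -xt) := by
  have habs : -J11 ≤ |J11| := neg_le_abs J11
  have hlM : 0 < J11 + J12 := by linarith
  have hJJ : J11 - J12 < 0 := by have := le_abs_self J11; linarith
  set c := β * (J11 + J12) / 2 with hcDef
  have hc : 1 < c := by
    have h2 := (div_lt_iff₀ hlM).mp hβ
    rw [hcDef]; nlinarith
  obtain ⟨xt, hxtI, hfix, huniq, hgmax, hgpos⟩ := exists_xt hc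
  have hxtIoo : xt ∈ Set.Ioo (-1:ℝ) 1 := ⟨by linarith [hxtI.1], hxtI.2⟩
  have hf0 : fSym β J11 J12 (0, 0) = 0 := by
    show β/8*(J11*(0^2 + 0^2) + 2*J12*0*0) - (entI 0 + entI 0)/2 = 0
    rw [entI_zero]; ring
  refine ⟨xt, hxtI, ?_, ?_, ?_, ⟨?_, ?_⟩, ?_, ?_⟩
  · conv_lhs => rw [← tanh_atanh hxtIoo]
    rw [hfix]
  · intro y hy htan
    apply huniq y hy
    conv_lhs => rw [htan]
    rw [atanh_tanh]
  · ext ⟨A, B⟩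
    simp only [Set.mem_setOf_eq, Set.mem_insert_iff, Set.mem_singleton_iff, Prod.mk.injEq]
    rw [critpt_iff]
    constructor
    · rintro ⟨hA, hB, h1, h2⟩
      have hAB : A = B := by
        rcases lt_trichotomy A B with h | h | h
        · exfalso
          have hm := atanh_mono hA hB h
          have hdiff : atanh A - atanh B = β/2*(J11-J12)*(A-B) := by rw [h1, h2]; ring
          nlinarith [mul_pos (mul_pos (by linarith : (0:ℝ) < β/2)
            (by linarith : (0:ℝ) < J12 - J11)) (by linarith : (0:ℝ) < B - A)]
        · exact h
        · exfalso
          have hm := atanh_mono hB hA h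
          have hdiff : atanh A - atanh B = β/2*(J11-J12)*(A-B) := by rw [h1, h2]; ring
          nlinarith [mul_pos (mul_pos (by linarith : (0:ℝ) < β/2)
            (by linarith : (0:ℝ) < J11 - J12 + (J12 - J11) + (J12 - J11))) (by linarith : (0:ℝ) < A - B)]
      subst hAB
      have heq : atanh A = c * A := by rw [h1, hcDef]; ring
      rcases lt_trichotomy A 0 with h | h | h
      · right; right
        have h' : -A ∈ Set.Ioo (0:ℝ) 1 := ⟨by linarith, by linarith [hA.1]⟩
        have h'' : atanh (-A) = c * (-A) := by rw [atanh_neg, heq]; ring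
        have := huniq (-A) h' h''
        constructor <;> linarith
      · left; exact ⟨h, h⟩
      · right; left
        have := huniq A ⟨h, hA.2⟩ heq
        exact ⟨this, this⟩
    · rintro (⟨h1, h2⟩ | ⟨h1, h2⟩ | ⟨h1, h2⟩) <;> subst h1 <;> subst h2
      · exact ⟨by norm_num, by norm_num, by rw [atanh_zero]; ring, by rw [atanh_zero]; ring⟩
      · refine ⟨hxtIoo, hxtIoo, ?_, ?_⟩ <;> (rw [hfix, hcDef]; ring)
      · refine ⟨⟨by linarith [hxtI.2], by linarith [hxtI.1]⟩,
          ⟨by linarith [hxtI.2], by linarith [hxtI.1]⟩, ?_, ?_⟩ <;>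
          (rw [atanh_neg, hfix, hcDef]; ring)
  · -- not a local max at the origin
    intro hmax
    obtain ⟨ε, hε, hball⟩ := Metric.eventually_nhds_iff.mp hmax
    obtain ⟨t, ht0, htε, ht1, htg⟩ := hgpos ε hε
    have hdist : dist ((t, t) : ℝ × ℝ) ((0, 0) : ℝ × ℝ) < ε := by
      rw [Prod.dist_eq]
      simp [Real.dist_eq, abs_of_pos ht0, htε]
    have hle := hball hdist
    rw [hf0] at hle
    have hd := fSym_diag β J11 J12 t
    rw [← hcDef] at hd
    rw [hd] at hle
    linarith
  · -- not a local min at the origin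
    intro hmin
    obtain ⟨ε, hε, hball⟩ := Metric.eventually_nhds_iff.mp hmin
    set t := min (1/2 : ℝ) (ε/2) with htDef
    have ht0 : 0 < t := by positivity
    have ht1 : t < 1 := lt_of_le_of_lt (min_le_left _ _) (by norm_num)
    have htε : t < ε := lt_of_le_of_lt (min_le_right _ _) (by linarith)
    have hdist : dist ((t, -t) : ℝ × ℝ) ((0, 0) : ℝ × ℝ) < ε := by
      rw [Prod.dist_eq]
      simp [Real.dist_eq, abs_of_pos ht0, abs_of_neg (neg_neg_iff_pos.mpr ht0), htε]
    have hge := hball hdist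
    rw [hf0] at hge
    have hval : fSym β J11 J12 (t, -t) = β/4*(J11 - J12)*t^2 - entI t := by
      show β/8*(J11*(t^2 + (-t)^2) + 2*J12*t*(-t)) - (entI t + entI (-t))/2 =
        β/4*(J11 - J12)*t^2 - entI t
      rw [entI_even]; ring
    rw [hval] at hge
    have hent := entI_nonneg ⟨ht0.le, ht1.le⟩
    nlinarith [sq_nonneg t, mul_pos (mul_pos hβ0 (neg_pos.mpr hJJ)) (pow_pos ht0 2)]
  · -- local max at (xt, xt)
    have hU : (Set.Ioo (-1:ℝ) 1 ×ˢ Set.Ioo (-1:ℝ) 1) ∈ nhds ((xt, xt) : ℝ × ℝ) :=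
      (isOpen_Ioo.prod isOpen_Ioo).mem_nhds ⟨hxtIoo, hxtIoo⟩
    refine Filter.eventually_of_mem hU ?_
    rintro ⟨A, B⟩ ⟨hA, hB⟩
    have h1 := fSym_le hβ0 hJJ.le (Set.mem_Icc_of_Ioo hA) (Set.mem_Icc_of_Ioo hB)
    rw [← hcDef] at h1
    have h2 := hgmax ((A+B)/2) ⟨by linarith [hA.1, hB.1], by linarith [hA.2, hB.2]⟩
    have hd := fSym_diag β J11 J12 xt
    rw [← hcDef] at hd
    show fSym β J11 J12 (A, B) ≤ fSym β J11 J12 (xt, xt)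
    rw [hd]
    linarith
  · -- local max at (-xt, -xt)
    have hmxt : (-xt) ∈ Set.Ioo (-1:ℝ) 1 := ⟨by linarith [hxtI.2], by linarith [hxtI.1]⟩
    have hU : (Set.Ioo (-1:ℝ) 1 ×ˢ Set.Ioo (-1:ℝ) 1) ∈ nhds ((-xt, -xt) : ℝ × ℝ) :=
      (isOpen_Ioo.prod isOpen_Ioo).mem_nhds ⟨hmxt, hmxt⟩
    refine Filter.eventually_of_mem hU ?_
    rintro ⟨A, B⟩ ⟨hA, hB⟩
    have h1 := fSym_le hβ0 hJJ.le (Set.mem_Icc_of_Ioo hA) (Set.mem_Icc_of_Ioo hB)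
    rw [← hcDef] at h1
    have h2 := hgmax ((A+B)/2) ⟨by linarith [hA.1, hB.1], by linarith [hA.2, hB.2]⟩
    have hd := fSym_diag β J11 J12 (-xt)
    rw [← hcDef, gCW_even] at hd
    show fSym β J11 J12 (A, B) ≤ fSym β J11 J12 (-xt, -xt)
    rw [hd]
    linarith
end

section
/- (Proposition 2, case 3) Assume J₁₁ < 0 and 0 < J₁₂ < |J₁₁| (so both eigenvalues J₁₁ + J₁₂ and J₁₁ − J₁₂ are negative). Then for every β > 0, the origin (0,0) is the unique critical point of f in (−1,1)², and it is a local maximum point of f. -/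
lemma hasDerivAt_entI_s14 {x : ℝ} (h1 : -1 < x) (h2 : x < 1) :
    HasDerivAt entI ((Real.log (1 + x) - Real.log (1 - x)) / 2) x := by
  have h1' : (0:ℝ) < 1 + x := by linarith
  have h2' : (0:ℝ) < 1 - x := by linarith
  have A : HasDerivAt (fun x : ℝ => 1 + x) 1 x := by
    simpa using (hasDerivAt_id x).const_add 1
  have B : HasDerivAt (fun x : ℝ => 1 - x) (-1) x := by
    simpa using (hasDerivAt_id x).const_sub 1
  have hA : HasDerivAt (fun x : ℝ => (1 + x) * Real.log (1 + x))
      (1 * Real.log (1 + x) + (1 + x) * (1 / (1 + x))) x :=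
    A.mul (A.log h1'.ne')
  have hB : HasDerivAt (fun x : ℝ => (1 - x) * Real.log (1 - x))
      ((-1) * Real.log (1 - x) + (1 - x) * (-1 / (1 - x))) x :=
    B.mul (B.log h2'.ne')
  have := (hA.add hB).div_const 2
  refine this.congr_deriv ?_
  field_simp
  ring

lemma entI_nonneg_s14 {x : ℝ} (h1 : -1 < x) (h2 : x < 1) : 0 ≤ entI x := by
  have h1' : (0:ℝ) < 1 + x := by linarith
  have h2' : (0:ℝ) < 1 - x := by linarith
  have key : ∀ t : ℝ, 0 < t → t - 1 ≤ t * Real.log t := by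
    intro t ht
    have := Real.log_le_sub_one_of_pos (x := 1/t) (by positivity)
    rw [Real.log_div one_ne_zero ht.ne', Real.log_one] at this
    have h := mul_le_mul_of_nonneg_left this ht.le
    rw [mul_sub] at h
    field_simp at h ⊢
    nlinarith
  have k1 := key (1 + x) h1'
  have k2 := key (1 - x) h2'
  unfold entI
  linarith

lemma hasDerivAt_fSym_fst (β J11 J12 y : ℝ) {x : ℝ} (h1 : -1 < x) (h2 : x < 1) :
    HasDerivAt (fun x => fSym β J11 J12 (x, y))
      (β / 4 * (J11 * x + J12 * y) - (Real.log (1 + x) - Real.log (1 - x)) / 4) x := by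
  have hx2 : HasDerivAt (fun x : ℝ => x ^ 2) (2 * x) x := by
    simpa using hasDerivAt_pow 2 x
  have hp1 : HasDerivAt (fun x : ℝ => J11 * (x ^ 2 + y ^ 2)) (J11 * (2 * x)) x :=
    (hx2.add_const (y ^ 2)).const_mul J11
  have hp2 : HasDerivAt (fun x : ℝ => 2 * J12 * x * y) (2 * J12 * y) x := by
    simpa using ((hasDerivAt_id x).const_mul (2 * J12)).mul_const y
  have hp : HasDerivAt (fun x : ℝ => β / 8 * (J11 * (x ^ 2 + y ^ 2) + 2 * J12 * x * y))
      (β / 8 * (J11 * (2 * x) + 2 * J12 * y)) x := (hp1.add hp2).const_mul (β / 8)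
  have he : HasDerivAt (fun x : ℝ => (entI x + entI y) / 2)
      ((Real.log (1 + x) - Real.log (1 - x)) / 2 / 2) x :=
    ((hasDerivAt_entI_s14 h1 h2).add_const (entI y)).div_const 2
  have := hp.sub he
  refine this.congr_deriv ?_
  ring

lemma fSym_swap (β J11 J12 x y : ℝ) :
    fSym β J11 J12 (x, y) = fSym β J11 J12 (y, x) := by
  simp only [fSym]
  ring

lemma hasDerivAt_fSym_snd (β J11 J12 x : ℝ) {y : ℝ} (h1 : -1 < y) (h2 : y < 1) :
    HasDerivAt (fun y => fSym β J11 J12 (x, y))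
      (β / 4 * (J11 * y + J12 * x) - (Real.log (1 + y) - Real.log (1 - y)) / 4) y := by
  have h := hasDerivAt_fSym_fst β J11 J12 x h1 h2
  have : (fun y => fSym β J11 J12 (x, y)) = fun y => fSym β J11 J12 (y, x) :=
    funext fun y => fSym_swap β J11 J12 x y
  rw [this]
  exact h


/-- Proposition 2, case 3: for J₁₁ < 0 and 0 < J₁₂ < |J₁₁| (both eigenvalues negative),
for every β > 0 the origin is the unique critical point of f and a local maximum
point. -/
theorem prop2_case3 (β J11 J12 : ℝ) (hJ11 : J11 < 0) (hJ12 : 0 < J12)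
    (hJ12' : J12 < |J11|) (hβ0 : 0 < β) :
    (∀ μ : ℝ × ℝ, IsCritPt β J11 J12 μ ↔ μ = (0, 0)) ∧
      IsLocalMax (fSym β J11 J12) (0, 0) := by
  rw [abs_of_neg hJ11] at hJ12'
  have hsum : J11 + J12 < 0 := by linarith
  have hdiff : J11 - J12 < 0 := by linarith
  have signL : ∀ x : ℝ, -1 < x → x < 1 →
      0 ≤ x * (Real.log (1 + x) - Real.log (1 - x)) := by
    intro x h1 h2
    rcases le_or_gt 0 x with hx | hx
    · have : Real.log (1 - x) ≤ Real.log (1 + x) :=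
        Real.log_le_log (by linarith) (by linarith)
      exact mul_nonneg hx (by linarith)
    · have : Real.log (1 + x) ≤ Real.log (1 - x) :=
        Real.log_le_log (by linarith) (by linarith)
      exact mul_nonneg_of_nonpos_of_nonpos hx.le (by linarith : Real.log (1 + x) - Real.log (1 - x) ≤ 0)
  constructor
  · intro μ
    obtain ⟨x, y⟩ := μ
    constructor
    · rintro ⟨⟨hx1, hx2⟩, ⟨hy1, hy2⟩, d1, d2⟩
      simp only at hx1 hx2 hy1 hy2 d1 d2
      rw [(hasDerivAt_fSym_fst β J11 J12 y hx1 hx2).deriv] at d1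
      rw [(hasDerivAt_fSym_snd β J11 J12 x hy1 hy2).deriv] at d2
      have e1 : β * (J11 * x + J12 * y) = Real.log (1 + x) - Real.log (1 - x) := by
        linarith
      have e2 : β * (J11 * y + J12 * x) = Real.log (1 + y) - Real.log (1 - y) := by
        linarith
      have s1 := signL x hx1 hx2
      have s2 := signL y hy1 hy2
      rw [← e1] at s1
      rw [← e2] at s2
      have hE : 0 ≤ J11 * (x ^ 2 + y ^ 2) + 2 * J12 * x * y := by
        nlinarith [s1, s2, hβ0]
      have hx0 : x ^ 2 + y ^ 2 ≤ 0 := by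
        nlinarith [sq_nonneg (x + y), sq_nonneg (x - y)]
      have : x = 0 ∧ y = 0 := by
        constructor <;> nlinarith [sq_nonneg x, sq_nonneg y]
      simp [this.1, this.2]
    · rintro h
      injection h with h1 h2
      subst h1; subst h2
      refine ⟨by norm_num, by norm_num, ?_, ?_⟩
      · rw [(hasDerivAt_fSym_fst β J11 J12 0 (by norm_num) (by norm_num)).deriv]
        norm_num
      · rw [(hasDerivAt_fSym_snd β J11 J12 0 (by norm_num) (by norm_num)).deriv]
        norm_num
  · have hmem : (Set.Ioo (-1:ℝ) 1 ×ˢ Set.Ioo (-1:ℝ) 1) ∈ nhds ((0:ℝ), (0:ℝ)) :=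
      (isOpen_Ioo.prod isOpen_Ioo).mem_nhds (by constructor <;> constructor <;> norm_num)
    filter_upwards [hmem] with μ hμ
    obtain ⟨⟨hx1, hx2⟩, ⟨hy1, hy2⟩⟩ := hμ
    have e1 := entI_nonneg_s14 hx1 hx2
    have e2 := entI_nonneg_s14 hy1 hy2
    have h0 : fSym β J11 J12 (0, 0) = 0 := by
      simp [fSym, entI]
    rw [h0]
    have hE : J11 * (μ.1 ^ 2 + μ.2 ^ 2) + 2 * J12 * μ.1 * μ.2 ≤ 0 := by
      nlinarith [sq_nonneg (μ.1 + μ.2), sq_nonneg (μ.1 - μ.2)]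
    simp only [fSym]
    nlinarith [mul_nonpos_of_nonneg_of_nonpos (by positivity : (0:ℝ) ≤ β / 8) hE]
end

section
/- Fix s ∈ (0,1]. For each t with 0 < t < s, let x(t) denote the unique solution in (0,1) of t·artanh(x) = s·x. Then, as t → 0⁺, x(t) → 1 and (s/2)·x(t)² − t·𝓘(x(t)) → s/2. -/
open Filter

/-- The inverse hyperbolic tangent, artanh(x) = (1/2)·log((1+x)/(1−x)). -/
noncomputable def artanh (x : ℝ) : ℝ := (1 / 2) * Real.log ((1 + x) / (1 - x))

lemma artanh_le_div {x : ℝ} (h0 : 0 < x) (h1 : x < 1) : artanh x ≤ x / (1 - x) := by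
  have hpos : (0 : ℝ) < (1 + x) / (1 - x) := div_pos (by linarith) (by linarith)
  have h2 := Real.log_le_sub_one_of_pos hpos
  have hne : (1 : ℝ) - x ≠ 0 := ne_of_gt (by linarith)
  have h3 : (1 + x) / (1 - x) - 1 = 2 * (x / (1 - x)) := by
    field_simp
    ring
  unfold artanh
  nlinarith [h2, h3]

lemma abs_entI_le {x : ℝ} (h0 : 0 < x) (h1 : x < 1) : |entI x| ≤ 2 := by
  have ha1 : 0 ≤ Real.log (1 + x) := Real.log_nonneg (by linarith)
  have ha2 : Real.log (1 + x) ≤ x := by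
    have := Real.log_le_sub_one_of_pos (show (0:ℝ) < 1 + x by linarith)
    linarith
  have hb1 : Real.log (1 - x) ≤ 0 := Real.log_nonpos (by linarith) (by linarith)
  have hb2 : -Real.log (1 - x) ≤ 1 / (1 - x) - 1 := by
    have := Real.log_le_sub_one_of_pos (show (0:ℝ) < (1 - x)⁻¹ by
      exact inv_pos.mpr (by linarith))
    rw [Real.log_inv] at this
    rw [one_div]
    exact this
  have hx1 : (0:ℝ) < 1 - x := by linarith
  have hb3 : (1 - x) * (-Real.log (1 - x)) ≤ x := by
    have := mul_le_mul_of_nonneg_left hb2 (le_of_lt hx1)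
    have heq : (1 - x) * (1 / (1 - x) - 1) = x := by field_simp; ring
    linarith
  unfold entI
  rw [abs_le]
  constructor
  · nlinarith [mul_nonneg (show (0:ℝ) ≤ 1 + x by linarith) ha1]
  · nlinarith [mul_nonpos_of_nonneg_of_nonpos (show (0:ℝ) ≤ 1 - x by linarith) hb1,
      mul_le_mul_of_nonneg_left ha2 (show (0:ℝ) ≤ 1 + x by linarith)]

/-- As t → 0⁺, the unique solution x(t) ∈ (0,1) of t·artanh(x) = s·x tends to 1, and
(s/2)·x(t)² − t·𝓘(x(t)) tends to s/2. -/
theorem maximizer_limit (s : ℝ) (hs : s ∈ Set.Ioc (0 : ℝ) 1) (x : ℝ → ℝ)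
    (hx : ∀ t ∈ Set.Ioo (0 : ℝ) s, x t ∈ Set.Ioo (0 : ℝ) 1 ∧
      t * artanh (x t) = s * x t ∧
      ∀ y ∈ Set.Ioo (0 : ℝ) 1, t * artanh y = s * y → y = x t) :
    Tendsto x (nhdsWithin 0 (Set.Ioi 0)) (nhds 1) ∧
      Tendsto (fun t => s / 2 * (x t) ^ 2 - t * entI (x t))
        (nhdsWithin 0 (Set.Ioi 0)) (nhds (s / 2)) := by
  obtain ⟨hs0, hs1⟩ := hs
  -- key: for 0 ≤ c < 1 and 0 < t < min s (s(1-c)), we have c < x t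
  have key : ∀ c : ℝ, 0 ≤ c → c < 1 → ∀ t : ℝ, 0 < t → t < min s (s * (1 - c)) →
      c < x t := by
    intro c hc0 hc1 t ht0 ht1
    have hts : t < s := lt_of_lt_of_le ht1 (min_le_left _ _)
    have htc : t < s * (1 - c) := lt_of_lt_of_le ht1 (min_le_right _ _)
    obtain ⟨⟨hx0, hx1⟩, heq, _⟩ := hx t ⟨ht0, hts⟩
    by_contra hle
    push_neg at hle
    have h1 : artanh (x t) ≤ x t / (1 - x t) := artanh_le_div hx0 hx1
    have h2 : x t / (1 - x t) ≤ x t / (1 - c) := by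
      apply div_le_div_of_nonneg_left (le_of_lt hx0) (by linarith) (by linarith)
    have h3 : s * x t ≤ t * (x t / (1 - c)) := by
      calc s * x t = t * artanh (x t) := heq.symm
        _ ≤ t * (x t / (1 - c)) := by
            apply mul_le_mul_of_nonneg_left (le_trans h1 h2) (le_of_lt ht0)
    have h4 : t * (x t / (1 - c)) < s * (1 - c) * (x t / (1 - c)) := by
      apply mul_lt_mul_of_pos_right htc (div_pos hx0 (by linarith))
    have hne : (1 : ℝ) - c ≠ 0 := ne_of_gt (by linarith)
    have h5 : s * (1 - c) * (x t / (1 - c)) = s * x t := by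
      field_simp
    linarith
  have h1 : Tendsto x (nhdsWithin 0 (Set.Ioi 0)) (nhds 1) := by
    rw [Metric.tendsto_nhdsWithin_nhds]
    intro ε hε
    set c := max 0 (1 - ε) with hc
    have hc0 : 0 ≤ c := le_max_left _ _
    have hc1 : c < 1 := by
      rw [hc]
      exact max_lt (by norm_num) (by linarith)
    refine ⟨min s (s * (1 - c)), lt_min hs0 (by nlinarith), ?_⟩
    intro t ht hdist
    rw [Real.dist_eq, sub_zero] at hdist
    have ht0 : 0 < t := ht
    rw [abs_of_pos ht0] at hdist
    have hcx : c < x t := key c hc0 hc1 t ht0 hdist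
    have hts : t < s := lt_of_lt_of_le hdist (min_le_left _ _)
    obtain ⟨⟨hx0, hx1⟩, _, _⟩ := hx t ⟨ht0, hts⟩
    rw [Real.dist_eq, abs_of_neg (by linarith : x t - 1 < 0)]
    have : 1 - c ≤ ε := by
      rw [hc]
      rcases le_total (1 - ε) 0 with h | h
      · rw [max_eq_left h]; linarith
      · rw [max_eq_right h]; linarith
    linarith
  have h2 : Tendsto (fun t => t * entI (x t)) (nhdsWithin 0 (Set.Ioi 0)) (nhds 0) := by
    have hb : ∀ᶠ t in nhdsWithin (0:ℝ) (Set.Ioi 0), ‖t * entI (x t)‖ ≤ 2 * t := by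
      filter_upwards [Ioo_mem_nhdsGT_of_mem (Set.left_mem_Ico.mpr hs0)] with t ht
      obtain ⟨⟨hx0, hx1⟩, _, _⟩ := hx t ht
      have ht0 : 0 < t := ht.1
      rw [norm_mul, Real.norm_eq_abs, Real.norm_eq_abs, abs_of_pos ht0]
      calc t * |entI (x t)| ≤ t * 2 :=
            mul_le_mul_of_nonneg_left (abs_entI_le hx0 hx1) (le_of_lt ht0)
        _ = 2 * t := by ring
    have hg : Tendsto (fun t : ℝ => 2 * t) (nhdsWithin (0:ℝ) (Set.Ioi 0)) (nhds 0) := by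
      have : Tendsto (fun t : ℝ => 2 * t) (nhds 0) (nhds (2 * 0)) :=
        (tendsto_id.const_mul 2)
      simpa using this.mono_left nhdsWithin_le_nhds
    exact squeeze_zero_norm' hb hg
  have h3 : Tendsto (fun t => s / 2 * (x t) ^ 2) (nhdsWithin 0 (Set.Ioi 0))
      (nhds (s / 2)) := by
    have := (h1.pow 2).const_mul (s / 2)
    simpa using this
  exact ⟨h1, by simpa using h3.sub h2⟩
end
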